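/- Let d ≥ 2 and β ∈ ℝ. Then the following are equivalent: (i) for every ψ : Fin d × Fin d → ℂ with Σ_{i,j} |ψ (i,j)|² = 1 such that the matrix X(ψ) : Matrix (Fin d) (Fin d) ℂ, X(ψ) i j = ψ (i,j), has Matrix.rank X(ψ) ≤ 2, one has 0 ≤ 1 + β · ‖Σ_i ψ (i,i)‖²; (ii) β ≥ -1/2. (In the paper's terms: the Werner state ρ_w with parameter β is 1-undistillable iff β ≥ -1/2.) -/

import Mathlib

open Finset Matrix

lemma trace_sq_le (d : ℕ) (ψ : Fin d × Fin d → ℂ)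
    (hnorm : ∑ p : Fin d × Fin d, ‖ψ p‖ ^ 2 = 1)
    (hrank : Matrix.rank (Matrix.of fun i j : Fin d => ψ (i, j)) ≤ 2) :
    ‖∑ i : Fin d, ψ (i, i)‖ ^ 2 ≤ 2 := by
  classical
  set A : Matrix (Fin d) (Fin d) ℂ := Matrix.of fun i j : Fin d => ψ (i, j) with hA
  -- row span in EuclideanSpace
  let e : (Fin d → ℂ) ≃ₗ[ℂ] EuclideanSpace ℂ (Fin d) :=
    (WithLp.linearEquiv 2 ℂ (Fin d → ℂ)).symm
  let S : Submodule ℂ (Fin d → ℂ) := Submodule.span ℂ (Set.range A)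
  let S' : Submodule ℂ (EuclideanSpace ℂ (Fin d)) := S.map (e : (Fin d → ℂ) →ₗ[ℂ] EuclideanSpace ℂ (Fin d))
  have hfr : Module.finrank ℂ S' ≤ 2 := by
    rw [show S' = Submodule.map (e : (Fin d → ℂ) →ₗ[ℂ] EuclideanSpace ℂ (Fin d)) S from rfl,
      LinearEquiv.finrank_map_eq e S]
    rw [Matrix.rank_eq_finrank_span_row] at hrank
    exact hrank
  set E := EuclideanSpace ℂ (Fin d)
  have hmem : ∀ i : Fin d, e (A i) ∈ S' :=
    fun i => Submodule.mem_map_of_mem (Submodule.subset_span ⟨i, rfl⟩)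
  set n := Module.finrank ℂ S' with hn
  let b : OrthonormalBasis (Fin n) ℂ S' := stdOrthonormalBasis ℂ S'
  let x : Fin d → S' := fun i => ⟨e (A i), hmem i⟩
  let c : Fin d → Fin n → ℂ := fun i k => b.repr (x i) k
  let u : Fin n → E := fun k => (b k : E)
  have hu : ∀ k, ‖u k‖ = 1 := fun k => by
    have := b.orthonormal.1 k
    exact this
  have happ : ∀ i j, ψ (i, j) = ∑ k, c i k * u k j := by
    intro i j
    have h0 : (x i : E) = ∑ k, c i k • (b k : E) := by
      conv_lhs => rw [← b.sum_repr (x i)]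
      push_cast
      rfl
    have h1 := congrArg (EuclideanSpace.proj j) h0
    simp [map_sum, c, x] at h1
    exact h1
  have hnormrow : ∀ i, ∑ k, ‖c i k‖ ^ 2 = ∑ j, ‖ψ (i, j)‖ ^ 2 := by
    intro i
    have h1 : ‖b.repr (x i)‖ = ‖x i‖ := b.repr.norm_map (x i)
    have h2 : ‖b.repr (x i)‖ ^ 2 = ∑ k, ‖c i k‖ ^ 2 := by
      rw [EuclideanSpace.norm_eq, Real.sq_sqrt (by positivity)]
    have h3 : ‖(x i : E)‖ ^ 2 = ∑ j, ‖ψ (i, j)‖ ^ 2 := by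
      rw [EuclideanSpace.norm_eq, Real.sq_sqrt (by positivity)]
      rfl
    rw [← h2, h1, ← h3]
    rfl
  -- the trace rewritten
  have htr : ∑ i : Fin d, ψ (i, i) = ∑ k, ∑ i, c i k * u k i := by
    rw [Finset.sum_comm]
    exact Finset.sum_congr rfl fun i _ => happ i i
  -- Cauchy-Schwarz per k
  let v : Fin n → E := fun k => (WithLp.toLp 2 (fun i => starRingEnd ℂ (c i k)) : EuclideanSpace ℂ (Fin d))
  have hv : ∀ k, ‖∑ i, c i k * u k i‖ ≤ ‖v k‖ := by
    intro k
    have h1 : (inner ℂ (v k) (u k) : ℂ) = ∑ i, c i k * u k i := by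
      rw [PiLp.inner_apply]
      exact Finset.sum_congr rfl fun i _ => by simp [v]; exact mul_comm _ _
    calc ‖∑ i, c i k * u k i‖ = ‖(inner ℂ (v k) (u k) : ℂ)‖ := by rw [h1]
      _ ≤ ‖v k‖ * ‖u k‖ := norm_inner_le_norm _ _
      _ = ‖v k‖ := by rw [hu k, mul_one]
  have hvsq : ∀ k, ‖v k‖ ^ 2 = ∑ i, ‖c i k‖ ^ 2 := by
    intro k
    rw [EuclideanSpace.norm_eq, Real.sq_sqrt (by positivity)]
    exact Finset.sum_congr rfl fun i _ => by simp [v]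
  have htot : ∑ k, ‖v k‖ ^ 2 = 1 := by
    rw [← hnorm, Fintype.sum_prod_type]
    rw [Finset.sum_congr rfl fun k _ => hvsq k, Finset.sum_comm]
    exact Finset.sum_congr rfl fun i _ => hnormrow i
  have hT : ‖∑ i : Fin d, ψ (i, i)‖ ≤ ∑ k, ‖v k‖ := by
    rw [htr]
    exact (norm_sum_le _ _).trans (Finset.sum_le_sum fun k _ => hv k)
  have hcs : (∑ k, ‖v k‖) ^ 2 ≤ (n : ℝ) * ∑ k, ‖v k‖ ^ 2 := by
    simpa using sq_sum_le_card_mul_sum_sq (s := Finset.univ) (f := fun k => ‖v k‖)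
  have hn2 : (n : ℝ) ≤ 2 := by exact_mod_cast hfr
  calc ‖∑ i : Fin d, ψ (i, i)‖ ^ 2 ≤ (∑ k, ‖v k‖) ^ 2 := by
        apply sq_le_sq' _ hT
        have : (0:ℝ) ≤ ∑ k, ‖v k‖ := Finset.sum_nonneg fun k _ => norm_nonneg _
        linarith [norm_nonneg (∑ i : Fin d, ψ (i, i))]
    _ ≤ (n : ℝ) * ∑ k, ‖v k‖ ^ 2 := hcs
    _ = (n : ℝ) := by rw [htot, mul_one]
    _ ≤ 2 := hn2




/-- For `d ≥ 2` and `β : ℝ`, the Werner state with parameter `β` is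
1-undistillable iff `β ≥ -1/2`: nonnegativity of `1 + β‖∑ i, ψ(i,i)‖²` over all normalized
`ψ` whose associated matrix has rank at most 2 is equivalent to `β ≥ -1/2`. -/
theorem werner_one_undistillable_iff
    (d : ℕ) (hd : 2 ≤ d) (β : ℝ) :
    (∀ ψ : Fin d × Fin d → ℂ,
        (∑ p : Fin d × Fin d, ‖ψ p‖ ^ 2 = 1) →
        Matrix.rank (Matrix.of fun i j : Fin d => ψ (i, j)) ≤ 2 →
        0 ≤ 1 + β * ‖∑ i : Fin d, ψ (i, i)‖ ^ 2) ↔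
      β ≥ -1 / 2 := by
  classical
  constructor
  · intro h
    set c : ℂ := (((Real.sqrt 2)⁻¹ : ℝ) : ℂ)
    set ψ : Fin d × Fin d → ℂ := fun p => if p.1 = p.2 ∧ (p.1 : ℕ) < 2 then c else 0 with hψ
    have ha : (0:ℕ) < d := by omega
    have hb : (1:ℕ) < d := by omega
    let a : Fin d := ⟨0, ha⟩
    let b : Fin d := ⟨1, hb⟩
    have hab : a ≠ b := by simp [a, b, Fin.ext_iff]
    have hfilt : Finset.univ.filter (fun i : Fin d => (i : ℕ) < 2) = {a, b} := by
      ext i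
      simp only [Finset.mem_filter, Finset.mem_univ, true_and, Finset.mem_insert,
        Finset.mem_singleton]
      constructor
      · intro hi
        have : (i:ℕ) = 0 ∨ (i:ℕ) = 1 := by omega
        rcases this with h0 | h1
        · left; exact Fin.ext h0
        · right; exact Fin.ext h1
      · rintro (rfl | rfl) <;> simp [a, b]
    have hcsq : ‖c‖ ^ 2 = 1/2 := by
      have h2 : (0:ℝ) < Real.sqrt 2 := Real.sqrt_pos.mpr (by norm_num)
      rw [show c = (((Real.sqrt 2)⁻¹ : ℝ) : ℂ) from rfl, Complex.norm_real, Real.norm_eq_abs,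
        abs_of_pos (by positivity)]
      rw [← Real.sqrt_inv, Real.sq_sqrt (by norm_num)]
      norm_num
    have hnorm : ∑ p : Fin d × Fin d, ‖ψ p‖ ^ 2 = 1 := by
      rw [Fintype.sum_prod_type]
      have hrow : ∀ i : Fin d, (∑ j, ‖ψ (i, j)‖ ^ 2) = if (i : ℕ) < 2 then ‖c‖^2 else 0 := by
        intro i
        by_cases h2 : (i:ℕ) ≤ 1 <;>
          simp [ψ, h2, apply_ite (fun z : ℂ => ‖z‖^2), apply_ite (fun z : ℂ => ‖z‖),
            apply_ite (fun r : ℝ => r^2), Finset.sum_ite_eq Finset.univ i]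
      rw [Finset.sum_congr rfl fun i _ => hrow i, Finset.sum_ite, Finset.sum_const,
        Finset.sum_const, hfilt]
      rw [Finset.card_insert_of_notMem (by simpa using hab), Finset.card_singleton]
      simp only [smul_eq_mul, smul_zero, add_zero]
      rw [hcsq]; norm_num
    have hrank : Matrix.rank (Matrix.of fun i j : Fin d => ψ (i, j)) ≤ 2 := by
      set A : Matrix (Fin d) (Fin d) ℂ := Matrix.of fun i j : Fin d => ψ (i, j) with hA
      set v1 : Fin d → ℂ := Pi.single a c
      set v2 : Fin d → ℂ := Pi.single b c
      set W : Submodule ℂ (Fin d → ℂ) := Submodule.span ℂ (↑({v1, v2} : Finset (Fin d → ℂ)))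
      have hsub : Set.range Aᵀ ⊆ (W : Set (Fin d → ℂ)) := by
        rintro _ ⟨j, rfl⟩
        by_cases h2 : (j:ℕ) < 2
        · have hjab : j = a ∨ j = b := by
            have : (j:ℕ) = 0 ∨ (j:ℕ) = 1 := by omega
            rcases this with h0 | h1
            · left; exact Fin.ext h0
            · right; exact Fin.ext h1
          rcases hjab with rfl | rfl
          · have hcol : Aᵀ a = v1 := by
              funext i
              simp only [Matrix.transpose_apply, hA, Matrix.of_apply, v1, Pi.single_apply]
              by_cases hij : i = a <;> simp [ψ, hij, h2, show ¬ 1 < (a:ℕ) by omega]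
            rw [hcol]
            exact Submodule.subset_span (by simp)
          · have hcol : Aᵀ b = v2 := by
              funext i
              simp only [Matrix.transpose_apply, hA, Matrix.of_apply, v2, Pi.single_apply]
              by_cases hij : i = b <;> simp [ψ, hij, h2, show ¬ 1 < (b:ℕ) by omega]
            rw [hcol]
            exact Submodule.subset_span (by simp)
        · have : Aᵀ j = 0 := by
            funext i
            simp only [Matrix.transpose_apply, hA, Matrix.of_apply, Pi.zero_apply]
            have : ¬(i = j ∧ (i:ℕ) < 2) := by rintro ⟨rfl, h⟩; exact h2 h
            simp [ψ, this]
            intro hij hi; exact absurd ⟨hij, by omega⟩ this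
          rw [this]
          exact W.zero_mem
      rw [Matrix.rank_eq_finrank_span_cols]
      calc Module.finrank ℂ (Submodule.span ℂ (Set.range Aᵀ))
          ≤ Module.finrank ℂ W :=
            Submodule.finrank_mono (Submodule.span_le.mpr hsub)
        _ ≤ ({v1, v2} : Finset (Fin d → ℂ)).card := finrank_span_finset_le_card _
        _ ≤ 2 := (Finset.card_insert_le _ _).trans (by simp)
    have htr : ∑ i : Fin d, ψ (i, i) = 2 * c := by
      have : ∀ i : Fin d, ψ (i, i) = if (i:ℕ) < 2 then c else 0 := by
        intro i; simp [ψ]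
      rw [Finset.sum_congr rfl fun i _ => this i, Finset.sum_ite, Finset.sum_const,
        Finset.sum_const, hfilt, Finset.card_insert_of_notMem (by simpa using hab),
        Finset.card_singleton]
      simp [two_mul]
    have := h ψ hnorm hrank
    rw [htr] at this
    have h2 : ‖(2:ℂ) * c‖ ^ 2 = 2 := by
      rw [norm_mul, mul_pow, hcsq]
      norm_num
    rw [h2] at this
    linarith
  · intro hβ ψ hnorm hrank
    have ht := trace_sq_le d ψ hnorm hrank
    have ht0 : 0 ≤ ‖∑ i : Fin d, ψ (i, i)‖ ^ 2 := by positivity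
    nlinarith
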